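/- Let A be a ℂ-algebra, M a finite-dimensional simple A-module with action ρ, and let η₁, ..., η_r be pairwise commuting automorphisms of A of finite orders s₁, ..., s_r. Suppose T₁, ..., T_r are invertible operators on M with ρ(η_j(a)) = T_j ρ(a) T_j⁻¹ for all a ∈ A and all j. Then for each pair i, j there is a scalar q_{ij} ∈ ℂ* with T_i T_j = q_{ij} T_j T_i, and q_{ij}^{gcd(s_i, s_j)} = 1. In particular, t_i ↦ T_i defines a representation of a cyclotomic quantum torus. -/
import Mathlib

/-- Schur's lemma: a `ℂ`-linear endomorphism of a finite-dimensional simple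
`A`-module commuting with the `A`-action is a scalar. -/
private lemma schur_scalar
    {A M : Type*} [Ring A] [Algebra ℂ A]
    [AddCommGroup M] [Module ℂ M] [Module A M] [IsScalarTower ℂ A M]
    [FiniteDimensional ℂ M] (hM : IsSimpleModule A M)
    (f : M →ₗ[ℂ] M) (hf : ∀ (a : A) (u : M), f (a • u) = a • f u) :
    ∃ c : ℂ, ∀ u, f u = c • u := by
  haveI := hM
  haveI : Nontrivial M := IsSimpleModule.nontrivial A M
  obtain ⟨c, hc⟩ := Module.End.exists_eigenvalue (f : Module.End ℂ M)
  obtain ⟨v, hv⟩ := hc.exists_hasEigenvector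
  have hsc : ∀ (a : A) (u : M), c • (a • u) = a • (c • u) := by
    intro a u
    calc c • (a • u) = algebraMap ℂ A c • (a • u) := (algebraMap_smul A c _).symm
      _ = (algebraMap ℂ A c * a) • u := (mul_smul _ _ _).symm
      _ = (a * algebraMap ℂ A c) • u := by rw [Algebra.commutes]
      _ = a • (algebraMap ℂ A c • u) := mul_smul _ _ _
      _ = a • (c • u) := by rw [algebraMap_smul]
  let g : M →ₗ[A] M :=
    { toFun := fun u => f u - c • u
      map_add' := by
        intro x y
        simp [map_add, smul_add]
        abel
      map_smul' := by
        intro a u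
        simp only [RingHom.id_apply, smul_sub, hf, hsc]
    }
  have hg : ¬ Function.Injective g := by
    intro h
    have h0 : g v = 0 := by
      simp only [g, LinearMap.coe_mk, AddHom.coe_mk]
      rw [hv.apply_eq_smul, sub_self]
    exact hv.right (by simpa using h (a₂ := 0) (by simpa using h0))
  have hg0 : g = 0 := (LinearMap.injective_or_eq_zero g).resolve_left hg
  refine ⟨c, fun u => ?_⟩
  have := LinearMap.congr_fun hg0 u
  simp only [g, LinearMap.coe_mk, AddHom.coe_mk, LinearMap.zero_apply] at this
  exact sub_eq_zero.mp this

theorem quantum_torus_from_commuting_twists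
    {A M : Type*} [Ring A] [Algebra ℂ A]
    [AddCommGroup M] [Module ℂ M] [Module A M] [IsScalarTower ℂ A M]
    [FiniteDimensional ℂ M] (hM : IsSimpleModule A M)
    {r : ℕ} (η : Fin r → A ≃ₐ[ℂ] A) (s : Fin r → ℕ)
    (hcomm : ∀ i j, η i * η j = η j * η i)
    (hs : ∀ i, 0 < s i) (hord : ∀ i, orderOf (η i) = s i)
    (T : Fin r → M ≃ₗ[ℂ] M)
    (hT : ∀ i, ∀ (a : A) (u : M), T i (a • u) = η i a • T i u) :
    ∃ q : Fin r → Fin r → ℂˣ,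
      (∀ i, q i i = 1) ∧ (∀ i j, q i j = (q j i)⁻¹) ∧
      (∀ i j, ((T i : M →ₗ[ℂ] M) * (T j : M →ₗ[ℂ] M)) =
          (q i j : ℂ) • ((T j : M →ₗ[ℂ] M) * (T i : M →ₗ[ℂ] M))) ∧
      ∀ i j, (q i j) ^ Nat.gcd (s i) (s j) = 1 := by
  haveI := hM
  haveI : Nontrivial M := IsSimpleModule.nontrivial A M
  obtain ⟨u₀, hu₀⟩ := exists_ne (0 : M)
  have hTinj : ∀ i, Function.Injective (T i) := fun i => (T i).injective
  have hTne : ∀ i (u : M), u ≠ 0 → T i u ≠ 0 := fun i u hu h =>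
    hu ((T i).map_eq_zero_iff.mp h)
  -- semilinearity of inverses
  have hTsymm : ∀ i (a : A) (u : M), (T i).symm (a • u) = (η i).symm a • (T i).symm u := by
    intro i a u
    apply (T i).injective
    rw [(T i).apply_symm_apply, hT i, (T i).apply_symm_apply, AlgEquiv.apply_symm_apply]
  have hηcomm : ∀ i j (a : A), η i (η j a) = η j (η i a) := by
    intro i j a
    have := congrArg (fun e : A ≃ₐ[ℂ] A => e a) (hcomm i j)
    simpa using this
  -- the basic commutation scalar
  have key : ∀ i j, ∃ c : ℂˣ, ∀ u, T i (T j u) = (c : ℂ) • T j (T i u) := by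
    intro i j
    set C : M →ₗ[ℂ] M :=
      ((T i).symm.toLinearMap ∘ₗ (T j).symm.toLinearMap) ∘ₗ
        ((T i).toLinearMap ∘ₗ (T j).toLinearMap) with hC
    have hCapp : ∀ u, C u = (T i).symm ((T j).symm (T i (T j u))) := fun u => rfl
    have hCA : ∀ (a : A) (u : M), C (a • u) = a • C u := by
      intro a u
      simp only [hCapp, hT, hTsymm]
      congr 1
      rw [hηcomm i j]
      simp
    obtain ⟨c, hc⟩ := schur_scalar hM C hCA
    have hcne : c ≠ 0 := by
      intro h
      apply hTne i _ (hTne j _ hu₀)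
      apply (T j).injective
      apply (T i).injective
      have := hc u₀
      rw [hCapp, h, zero_smul] at this
      simpa using this
    refine ⟨Units.mk0 c hcne, fun u => ?_⟩
    have := hc u
    rw [hCapp] at this
    have h2 := congrArg (fun v => T j (T i v)) this
    simp only [map_smul] at h2
    rw [(T i).apply_symm_apply, (T j).apply_symm_apply] at h2
    simpa using h2
  choose q hq using key
  -- scalar cancellation helper
  have cancel : ∀ (c : ℂ) (v : M), v ≠ 0 → c • v = v → c = 1 := by
    intro c v hv h
    by_contra hc
    exact hv (by
      have : (c - 1) • v = 0 := by rw [sub_smul, one_smul, h, sub_self]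
      exact (smul_eq_zero.mp this).resolve_left (sub_ne_zero.mpr hc) )
  -- iterates
  have iter : ∀ i n (a : A) (u : M),
      (⇑(T i))^[n] (a • u) = ((η i) ^ n) a • (⇑(T i))^[n] u := by
    intro i n
    induction n with
    | zero => intro a u; simp
    | succ n ih =>
      intro a u
      rw [Function.iterate_succ_apply', Function.iterate_succ_apply', ih, hT i,
        pow_succ' (η i) n]
      rfl
  have iterq : ∀ i j n (u : M),
      (⇑(T i))^[n] (T j u) = ((q i j : ℂ)) ^ n • T j ((⇑(T i))^[n] u) := by
    intro i j n
    induction n with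
    | zero => intro u; simp
    | succ n ih =>
      intro u
      rw [Function.iterate_succ_apply', Function.iterate_succ_apply', ih, map_smul,
        hq i j, pow_succ]
      rw [smul_smul]
  -- T i ^ (s i) is a nonzero scalar
  have pows : ∀ i, ∃ c : ℂ, c ≠ 0 ∧ ∀ u, (⇑(T i))^[s i] u = c • u := by
    intro i
    have hA : ∀ (a : A) (u : M),
        ((T i).toLinearMap ^ (s i)) (a • u) = a • ((T i).toLinearMap ^ (s i)) u := by
      intro a u
      rw [Module.End.pow_apply, Module.End.pow_apply]
      simp only [LinearEquiv.coe_coe]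
      rw [iter i (s i)]
      rw [← hord i, pow_orderOf_eq_one]
      rfl
    obtain ⟨c, hc⟩ := schur_scalar hM _ hA
    refine ⟨c, ?_, fun u => ?_⟩
    · intro h
      apply hu₀
      have := hc u₀
      rw [h, zero_smul, Module.End.pow_apply] at this
      simpa using (Function.Injective.iterate (T i).injective (s i)) (a₂ := 0)
        (by simpa using this)
    · have := hc u
      rwa [Module.End.pow_apply] at this
  -- q i j ^ s i = 1 in ℂ
  have qpow : ∀ i j, (q i j : ℂ) ^ (s i) = 1 := by
    intro i j
    obtain ⟨c, hc0, hc⟩ := pows i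
    have h1 := iterq i j (s i) u₀
    rw [hc (T j u₀), hc u₀, map_smul, smul_smul] at h1
    have h3 : ((q i j : ℂ) ^ (s i) * c - c) • T j u₀ = 0 := by
      rw [sub_smul, ← h1, sub_self]
    have h4 := (smul_eq_zero.mp h3).resolve_right (hTne j _ hu₀)
    have h5 : (q i j : ℂ) ^ (s i) * c = 1 * c := by
      rw [one_mul]; exact sub_eq_zero.mp h4
    exact mul_right_cancel₀ hc0 h5
  have qinv : ∀ i j, (q i j) * (q j i) = 1 := by
    intro i j
    apply Units.ext
    push_cast
    have h1 := hq i j u₀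
    have h2 := hq j i u₀
    rw [h2, smul_smul] at h1
    exact cancel _ _ (hTne i _ (hTne j _ hu₀)) h1.symm
  refine ⟨q, ?_, ?_, ?_, ?_⟩
  · intro i
    apply Units.ext
    have := hq i i u₀
    exact cancel _ _ (hTne i _ (hTne i _ hu₀)) (this.symm)
  · intro i j
    exact eq_inv_of_mul_eq_one_left (by rw [mul_comm]; exact qinv j i)
  · intro i j
    ext u
    simpa using hq i j u
  · intro i j
    have hdi : orderOf (q i j) ∣ s i := by
      apply orderOf_dvd_of_pow_eq_one
      apply Units.ext
      push_cast
      exact qpow i j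
    have hdj : orderOf (q i j) ∣ s j := by
      apply orderOf_dvd_of_pow_eq_one
      have : q i j = (q j i)⁻¹ :=
        eq_inv_of_mul_eq_one_left (by rw [mul_comm]; exact qinv j i)
      rw [this, inv_pow]
      apply inv_eq_one.mpr
      apply Units.ext
      push_cast
      exact qpow j i
    exact orderOf_dvd_iff_pow_eq_one.mp (Nat.dvd_gcd hdi hdj)
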